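/- If a > a' > 0 are rationals and a = b_0/c_0 > ⋯ > b_n/c_n = a' is a shortest N-path, then for 0 < i < n one has lcm(N, c_i) ≠ lcm(N, c_{i-1}) + lcm(N, c_{i+1}). -/

import Mathlib

/-- An `N`-path is a strictly decreasing sequence of rationals (automatically
in lowest terms, as elements of `ℚ`) such that consecutive entries `x > y`
satisfy `x − y = N / (lcm(N, x.den) · lcm(N, y.den))`. -/
def IsNPath (N : ℕ) (l : List ℚ) : Prop :=
  l.Chain' fun x y => y < x ∧
    x - y = (N : ℚ) / ((Nat.lcm N x.den : ℚ) * (Nat.lcm N y.den : ℚ))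

/-- An `N`-path from `a` to `a'`: an `N`-path whose first entry is `a` and
whose last entry is `a'`. -/
def IsNPathFrom (N : ℕ) (a a' : ℚ) (l : List ℚ) : Prop :=
  IsNPath N l ∧ l.head? = some a ∧ l.getLast? = some a'

/-- A shortest `N`-path from `a` to `a'`: an `N`-path from `a` to `a'` such
that no proper subsequence (containing the endpoints) is an `N`-path from `a`
to `a'`. -/
def IsShortestNPath (N : ℕ) (a a' : ℚ) (l : List ℚ) : Prop :=
  IsNPathFrom N a a' l ∧
    ∀ l' : List ℚ, l'.Sublist l → l' ≠ l → ¬ IsNPathFrom N a a' l'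


set_option maxHeartbeats 1000000 in
theorem stmt12 (N : ℕ) (hN : 0 < N) (a a' : ℚ) (h : a' < a) (h0 : 0 < a')
    (l : List ℚ) (hl : IsShortestNPath N a a' l)
    (i : ℕ) (hi0 : 0 < i) (hi1 : i + 1 < l.length) :
    Nat.lcm N (l[i]'(by omega)).den ≠
      Nat.lcm N (l[i - 1]'(by omega)).den + Nat.lcm N (l[i + 1]'hi1).den := by
  intro heq
  obtain ⟨⟨hpath, hhead, hlast⟩, hmin⟩ := hl
  have hlenpos : i < l.length := by omega
  have hle : (l.eraseIdx i).length = l.length - 1 := List.length_eraseIdx_of_lt hlenpos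
  refine hmin (l.eraseIdx i) (List.eraseIdx_sublist l i) ?_ ⟨?_, ?_, ?_⟩
  · intro hcontra
    have := congrArg List.length hcontra
    rw [hle] at this
    omega
  · simp only [IsNPath, List.Chain']; rw [List.isChain_iff_getElem]
    have hchain := List.isChain_iff_getElem.mp hpath
    intro j hj
    rw [hle] at hj
    rcases lt_or_ge (j + 1) i with hji | hji
    · rw [List.getElem_eraseIdx_of_lt (l := l) (i := i) (j := j + 1) (by omega) hji,
        List.getElem_eraseIdx_of_lt (l := l) (i := i) (j := j) (by omega) (by omega)]
      have := hchain j (by omega)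
      simpa using this
    · rcases eq_or_lt_of_le hji with hji' | hji'
      · -- bridging pair: j = i - 1
        have hj' : j = i - 1 := by omega
        subst hj'
        have hii : i - 1 + 1 = i := by omega
        simp only [hii]
        have e1 : (l.eraseIdx i)[i - 1]'(by omega) = l[i - 1]'(by omega) :=
          List.getElem_eraseIdx_of_lt (l := l) (i := i) (j := i - 1) (by omega) (by omega)
        have e2 : (l.eraseIdx i)[i]'(by omega) = l[i + 1]'hi1 :=
          List.getElem_eraseIdx_of_ge (l := l) (i := i) (j := i) (by omega) le_rfl
        rw [e1, e2]
        have h1 := hchain (i - 1) (by omega)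
        have h2 := hchain i (by omega)
        simp only [List.get_eq_getElem, hii] at h1 h2
        obtain ⟨h1l, h1e⟩ := h1
        obtain ⟨h2l, h2e⟩ := h2
        refine ⟨h2l.trans h1l, ?_⟩
        have hAq : ((Nat.lcm N (l[i - 1]'(by omega)).den : ℕ) : ℚ) ≠ 0 :=
          Nat.cast_ne_zero.mpr (Nat.lcm_ne_zero (by omega) (l[i - 1]'(by omega)).den_nz)
        have hBq : ((Nat.lcm N (l[i]'(by omega)).den : ℕ) : ℚ) ≠ 0 :=
          Nat.cast_ne_zero.mpr (Nat.lcm_ne_zero (by omega) (l[i]'(by omega)).den_nz)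
        have hCq : ((Nat.lcm N (l[i + 1]'hi1).den : ℕ) : ℚ) ≠ 0 :=
          Nat.cast_ne_zero.mpr (Nat.lcm_ne_zero (by omega) (l[i + 1]'hi1).den_nz)
        have hBe : ((Nat.lcm N (l[i]'(by omega)).den : ℕ) : ℚ) =
            (Nat.lcm N (l[i - 1]'(by omega)).den : ℕ) +
              ((Nat.lcm N (l[i + 1]'hi1).den : ℕ) : ℚ) := by exact_mod_cast heq
        have step : (l[i - 1]'(by omega)) - (l[i + 1]'hi1) =
            (N : ℚ) / ((Nat.lcm N (l[i - 1]'(by omega)).den : ℕ) *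
                ((Nat.lcm N (l[i]'(by omega)).den : ℕ) : ℚ)) +
              (N : ℚ) / ((Nat.lcm N (l[i]'(by omega)).den : ℕ) *
                ((Nat.lcm N (l[i + 1]'hi1).den : ℕ) : ℚ)) := by
          rw [← h1e, ← h2e]; ring
        rw [step]
        field_simp
        rw [hBe]; ring
      · rw [List.getElem_eraseIdx_of_ge (l := l) (i := i) (j := j + 1) (by omega) (by omega),
          List.getElem_eraseIdx_of_ge (l := l) (i := i) (j := j) (by omega) (by omega)]
        have := hchain (j + 1) (by omega)
        simpa using this
  · rw [List.head?_eq_getElem?, List.getElem?_eraseIdx_of_lt (l := l) (i := i) (j := 0) hi0,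
      ← List.head?_eq_getElem?]
    exact hhead
  · rw [List.getLast?_eq_getElem?, hle,
      List.getElem?_eraseIdx_of_ge (l := l) (i := i) (j := l.length - 1 - 1) (by omega)]
    rw [List.getLast?_eq_getElem?] at hlast
    have heq2 : l.length - 1 - 1 + 1 = l.length - 1 := by omega
    rw [heq2]
    exact hlast
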